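/- If (u, v, ρ) with ρ = 1/√(q² + κ), q² = u² + v² > 0, satisfy the momentum balance equations ∂ₓ(ρuv) + ∂ᵧ(ρv²+p) = R₁ and ∂ₓ(ρu²+p) + ∂ᵧ(ρuv) = R₂ with p = -√(q²+κ), and all functions are C¹, then they satisfy the rotationality-continuity equations: ∂ₓv - ∂ᵧu = (1/(ρq²))(u(½ρ∂ᵧκ + R₁) - v(½ρ∂ₓκ + R₂)) and ∂ₓ(ρu) + ∂ᵧ(ρv) = (ρu/(2q²))∂ₓκ + (ρv/(2q²))∂ᵧκ + (v/q²)R₁ + (u/q²)R₂. -/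

import Mathlib

set_option maxHeartbeats 2000000 in
/-- if (u, v, ρ) with ρ = 1/√(q²+κ), p = -√(q²+κ), satisfy the
momentum balance equations with right-hand sides R₁, R₂, then they satisfy
the rotationality-continuity equations. -/
theorem momentum_to_rotationality_continuity
    (Ω : Set (ℝ × ℝ)) (hΩ : IsOpen Ω)
    (u v κ R₁ R₂ : ℝ × ℝ → ℝ)
    (hu : ∀ z ∈ Ω, ContDiffAt ℝ 1 u z)
    (hv : ∀ z ∈ Ω, ContDiffAt ℝ 1 v z)
    (hκ : ∀ z ∈ Ω, ContDiffAt ℝ 1 κ z)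
    (hR₁ : ContinuousOn R₁ Ω) (hR₂ : ContinuousOn R₂ Ω)
    (hq : ∀ z ∈ Ω, 0 < (u z) ^ 2 + (v z) ^ 2)
    (hqκ : ∀ z ∈ Ω, 0 < (u z) ^ 2 + (v z) ^ 2 + κ z)
    (ρ p : ℝ × ℝ → ℝ)
    (hρ : ∀ z ∈ Ω, ρ z = 1 / Real.sqrt ((u z) ^ 2 + (v z) ^ 2 + κ z))
    (hp : ∀ z ∈ Ω, p z = -Real.sqrt ((u z) ^ 2 + (v z) ^ 2 + κ z))
    (hmom1 : ∀ z ∈ Ω,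
      fderiv ℝ (fun w => ρ w * u w * v w) z (1, 0) +
        fderiv ℝ (fun w => ρ w * (v w) ^ 2 + p w) z (0, 1) = R₁ z)
    (hmom2 : ∀ z ∈ Ω,
      fderiv ℝ (fun w => ρ w * (u w) ^ 2 + p w) z (1, 0) +
        fderiv ℝ (fun w => ρ w * u w * v w) z (0, 1) = R₂ z) :
    ∀ z ∈ Ω,
      (fderiv ℝ v z (1, 0) - fderiv ℝ u z (0, 1) =
        (1 / (ρ z * ((u z) ^ 2 + (v z) ^ 2))) *
          (u z * ((1 / 2) * ρ z * fderiv ℝ κ z (0, 1) + R₁ z) -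
           v z * ((1 / 2) * ρ z * fderiv ℝ κ z (1, 0) + R₂ z))) ∧
      (fderiv ℝ (fun w => ρ w * u w) z (1, 0) +
        fderiv ℝ (fun w => ρ w * v w) z (0, 1) =
        (1 / 2) * (ρ z * u z / ((u z) ^ 2 + (v z) ^ 2)) * fderiv ℝ κ z (1, 0) +
        (1 / 2) * (ρ z * v z / ((u z) ^ 2 + (v z) ^ 2)) * fderiv ℝ κ z (0, 1) +
        (v z / ((u z) ^ 2 + (v z) ^ 2)) * R₁ z +
        (u z / ((u z) ^ 2 + (v z) ^ 2)) * R₂ z) := by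
  intro z hz
  have hΩz : Ω ∈ nhds z := hΩ.mem_nhds hz
  have hu' : HasFDerivAt u (fderiv ℝ u z) z :=
    ((hu z hz).differentiableAt one_ne_zero).hasFDerivAt
  have hv' : HasFDerivAt v (fderiv ℝ v z) z :=
    ((hv z hz).differentiableAt one_ne_zero).hasFDerivAt
  have hκ' : HasFDerivAt κ (fderiv ℝ κ z) z :=
    ((hκ z hz).differentiableAt one_ne_zero).hasFDerivAt
  set U := fderiv ℝ u z with hU
  set V := fderiv ℝ v z with hV
  set K := fderiv ℝ κ z with hK
  -- derivative of F = u² + v² + κ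
  have hF : HasFDerivAt (fun w => u w ^ 2 + v w ^ 2 + κ w)
      ((u z • U + u z • U) + (v z • V + v z • V) + K) z := by
    have := ((hu'.fun_mul hu').fun_add (hv'.fun_mul hv')).fun_add hκ'
    simpa [pow_two] using this
  set Fd : (ℝ × ℝ) →L[ℝ] ℝ := (u z • U + u z • U) + (v z • V + v z • V) + K with hFd
  have hSpos : (0:ℝ) < u z ^ 2 + v z ^ 2 + κ z := hqκ z hz
  have hsqrt : HasFDerivAt (fun w => Real.sqrt (u w ^ 2 + v w ^ 2 + κ w))
      ((1 / (2 * Real.sqrt (u z ^ 2 + v z ^ 2 + κ z))) • Fd) z :=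
    hF.sqrt (ne_of_gt hSpos)
  have hsqpos : (0:ℝ) < Real.sqrt (u z ^ 2 + v z ^ 2 + κ z) := Real.sqrt_pos.mpr hSpos
  -- derivative of ρ
  have hρev : ρ =ᶠ[nhds z] fun w => (Real.sqrt (u w ^ 2 + v w ^ 2 + κ w))⁻¹ := by
    filter_upwards [hΩz] with w hw
    rw [hρ w hw, one_div]
  have hρ' : HasFDerivAt ρ
      ((-(Real.sqrt (u z ^ 2 + v z ^ 2 + κ z) ^ 2)⁻¹) •
        ((1 / (2 * Real.sqrt (u z ^ 2 + v z ^ 2 + κ z))) • Fd)) z := by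
    have hinv := (hasDerivAt_inv hsqpos.ne').comp_hasFDerivAt z hsqrt
    exact hinv.congr_of_eventuallyEq hρev
  -- derivative of p
  have hpev : p =ᶠ[nhds z] fun w => -Real.sqrt (u w ^ 2 + v w ^ 2 + κ w) := by
    filter_upwards [hΩz] with w hw
    rw [hp w hw]
  have hp' : HasFDerivAt p
      (-((1 / (2 * Real.sqrt (u z ^ 2 + v z ^ 2 + κ z))) • Fd)) z :=
    hsqrt.neg.congr_of_eventuallyEq hpev
  -- derivatives of the composite functions
  have hruv := (hρ'.fun_mul hu').fun_mul hv'
  have hrv2p : HasFDerivAt (fun w => ρ w * v w ^ 2 + p w)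
      (((ρ z • (v z • V + v z • V) +
        (v z * v z) • ((-(Real.sqrt (u z ^ 2 + v z ^ 2 + κ z) ^ 2)⁻¹) •
          ((1 / (2 * Real.sqrt (u z ^ 2 + v z ^ 2 + κ z))) • Fd)))) +
        (-((1 / (2 * Real.sqrt (u z ^ 2 + v z ^ 2 + κ z))) • Fd))) z := by
    have := (hρ'.fun_mul (hv'.fun_mul hv')).fun_add hp'
    simpa [pow_two] using this
  have hru2p : HasFDerivAt (fun w => ρ w * u w ^ 2 + p w)
      (((ρ z • (u z • U + u z • U) +
        (u z * u z) • ((-(Real.sqrt (u z ^ 2 + v z ^ 2 + κ z) ^ 2)⁻¹) •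
          ((1 / (2 * Real.sqrt (u z ^ 2 + v z ^ 2 + κ z))) • Fd)))) +
        (-((1 / (2 * Real.sqrt (u z ^ 2 + v z ^ 2 + κ z))) • Fd))) z := by
    have := (hρ'.fun_mul (hu'.fun_mul hu')).fun_add hp'
    simpa [pow_two] using this
  have hru := hρ'.fun_mul hu'
  have hrv := hρ'.fun_mul hv'
  have h1 := hmom1 z hz
  have h2 := hmom2 z hz
  rw [hruv.fderiv, hrv2p.fderiv] at h1
  rw [hruv.fderiv, hru2p.fderiv] at h2
  rw [hru.fderiv, hrv.fderiv]
  have hρz : ρ z = (Real.sqrt (u z ^ 2 + v z ^ 2 + κ z))⁻¹ := by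
    rw [hρ z hz, one_div]
  set sq := Real.sqrt (u z ^ 2 + v z ^ 2 + κ z) with hsqdef
  have hq2 : (0:ℝ) < u z ^ 2 + v z ^ 2 := hq z hz
  rw [hρz] at h1 h2 ⊢
  simp only [ContinuousLinearMap.add_apply, ContinuousLinearMap.smul_apply,
    ContinuousLinearMap.neg_apply, smul_eq_mul] at h1 h2 ⊢
  have hFd1 : Fd (1, 0) = 2 * u z * U (1, 0) + 2 * v z * V (1, 0) + K (1, 0) := by
    simp only [hFd, ContinuousLinearMap.add_apply, ContinuousLinearMap.smul_apply,
      smul_eq_mul]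
    ring
  have hFd2 : Fd (0, 1) = 2 * u z * U (0, 1) + 2 * v z * V (0, 1) + K (0, 1) := by
    simp only [hFd, ContinuousLinearMap.add_apply, ContinuousLinearMap.smul_apply,
      smul_eq_mul]
    ring
  rw [hFd1, hFd2] at h1 h2 ⊢
  constructor
  · rw [← h1, ← h2]
    field_simp
    ring
  · rw [← h1, ← h2]
    field_simp
    ring
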